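/- Let G = (Q, q_in, q_out, T) be a strongly connected VASS of dimension d, let i be a component not fixed by G, and let B ∈ ℕ with x(i) < B. Let G' be the (i,B,r)-unfolding of G for any r ∈ ℕ_B = {0,…,B−1,ω}. Then rank(G') <_lex rank(G), where the rank of a VASS is the tuple (r_d,…,r_0) ∈ ℕ^{d+1} counting for each dimension j the number of transitions t with dim VS(t) = j, ordered lexicographically with most significant coordinate r_d. -/

import Mathlib

/-- A transition of a VASS of dimension `d` with states in `Q`. -/
abbrev VTrans (Q : Type) (d : ℕ) := Q × (Fin d → ℤ) × Q

/-- `IsPath T p q l` : `l` is a path in the VASS with transition set `T`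
from state `p` to state `q`. -/
inductive IsPath {Q : Type} {d : ℕ} (T : Set (VTrans Q d)) : Q → Q → List (VTrans Q d) → Prop
  | nil (q : Q) : IsPath T q q []
  | cons {p q r : Q} {a : Fin d → ℤ} {l : List (VTrans Q d)} :
      (p, a, q) ∈ T → IsPath T q r l → IsPath T p r ((p, a, q) :: l)

/-- Displacement of a path in `ℚ^d`. -/
def dispQ {Q : Type} {d : ℕ} (l : List (VTrans Q d)) : Fin d → ℚ :=
  fun i => (((l.map (fun t : VTrans Q d => t.2.1)).sum) i : ℚ)

/-- `VS T t`: the `ℚ`-vector space spanned by the displacements of the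
cycles containing the transition `t`. -/
def VS {Q : Type} {d : ℕ} (T : Set (VTrans Q d)) (t : VTrans Q d) :
    Submodule ℚ (Fin d → ℚ) :=
  Submodule.span ℚ {v | ∃ q l, IsPath T q q l ∧ t ∈ l ∧ v = dispQ l}

/-- The rank of a VASS: the tuple `(r_d, …, r_0)` where `r_j` is the number of
transitions `t` with `dim VS(t) = j`; index `j` of the tuple corresponds to
dimension `j`, the most significant coordinate being `r_d`. -/
noncomputable def rankVASS {Q : Type} {d : ℕ} (T : Set (VTrans Q d)) :
    Fin (d + 1) → ℕ :=
  fun j => Set.ncard {t | t ∈ T ∧ Module.finrank ℚ ↥(VS T t) = (j : ℕ)}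

/-- Strict lexicographic order with most significant coordinate at the
largest index. -/
def LexLt {d : ℕ} (r s : Fin (d + 1) → ℕ) : Prop :=
  ∃ i, r i < s i ∧ ∀ j, i < j → r j = s j

/-- The transitions of the `(i,B,·)`-unfolding of a VASS with transitions `T`
and input state `qin`: states are pairs `(q, m)` with `m ∈ ℕ_B = {0,…,B−1,ω}`
(`ω` encoded as `⊤ : ℕ∞`), and a transition `((p,m),a,(q,n))` exists whenever
`(p,a,q) ∈ T` and either `m, n < B` with `n = m + a(i)`, or `m < B`, `n = ω`
and `m + a(i) ≥ B`, or `m = n = ω`; moreover `m = ω` requires `q ≠ qin`. -/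
def Unfold {Q : Type} {d : ℕ} (T : Set (VTrans Q d)) (qin : Q) (i : Fin d)
    (B : ℕ) : Set (VTrans (Q × ℕ∞) d) :=
  { tr | ∃ (p q : Q) (a : Fin d → ℤ) (m n : ℕ∞),
      tr = ((p, m), a, (q, n)) ∧ (p, a, q) ∈ T ∧
      ((∃ mv nv : ℕ, mv < B ∧ nv < B ∧ m = (mv : ℕ∞) ∧ n = (nv : ℕ∞) ∧
          (nv : ℤ) = (mv : ℤ) + a i)
        ∨ (∃ mv : ℕ, mv < B ∧ m = (mv : ℕ∞) ∧ n = ⊤ ∧ (B : ℤ) ≤ (mv : ℤ) + a i)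
        ∨ (m = ⊤ ∧ n = ⊤ ∧ q ≠ qin)) }

namespace Scratch

variable {Q : Type} {d : ℕ} {T : Set (VTrans Q d)}

lemma isPath_append {p q r : Q} {l1 l2 : List (VTrans Q d)}
    (h1 : IsPath T p q l1) (h2 : IsPath T q r l2) : IsPath T p r (l1 ++ l2) := by
  induction h1 with
  | nil => simpa
  | cons ht _ ih => exact IsPath.cons ht (ih h2)

lemma isPath_nil_eq {p q : Q} (h : IsPath T p q []) : p = q := by
  cases h; rfl

lemma isPath_last {p q : Q} {l : List (VTrans Q d)} (h : IsPath T p q l) :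
    p = q ∨ ∃ s b, (s, b, q) ∈ T := by
  induction h with
  | nil => exact Or.inl rfl
  | cons ht h ih =>
    rcases ih with rfl | hex
    · exact Or.inr ⟨_, _, ht⟩
    · exact Or.inr hex

lemma sum_apply (l : List (VTrans Q d)) (j : Fin d) :
    ((l.map (fun t : VTrans Q d => t.2.1)).sum) j = (l.map (fun t : VTrans Q d => t.2.1 j)).sum := by
  induction l with
  | nil => simp
  | cons t l ih => simp [ih]

lemma dispQ_apply (l : List (VTrans Q d)) (j : Fin d) :
    dispQ l j = ((l.map (fun t : VTrans Q d => t.2.1 j)).sum : ℤ) := by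
  rw [dispQ, sum_apply]

lemma dispQ_append (l1 l2 : List (VTrans Q d)) :
    dispQ (l1 ++ l2) = dispQ l1 + dispQ l2 := by
  funext j
  simp [dispQ_apply]

lemma dispQ_cons (t : VTrans Q d) (l : List (VTrans Q d)) :
    dispQ (t :: l) = (fun j => (t.2.1 j : ℚ)) + dispQ l := by
  funext j
  simp [dispQ_apply]


def zdisp {Q : Type} {d : ℕ} (i : Fin d) (l : List (VTrans Q d)) : ℤ :=
  (l.map (fun t : VTrans Q d => t.2.1 i)).sum

lemma zdisp_append (i : Fin d) (l1 l2 : List (VTrans Q d)) :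
    zdisp i (l1 ++ l2) = zdisp i l1 + zdisp i l2 := by
  simp [zdisp]

lemma exists_nonzero_cycle {Q : Type} {d : ℕ} {T : Set (VTrans Q d)} (qin : Q) (hsc : ∀ p q : Q, ∃ l, IsPath T p q l) (i : Fin d)
    (hnf : ¬ ∃ f : Q → ℤ, ∀ p a q, (p, a, q) ∈ T → f q = f p + a i) :
    ∃ (q : Q) (l : List (VTrans Q d)), IsPath T q q l ∧ zdisp i l ≠ 0 := by
  by_contra hc
  push_neg at hc
  apply hnf
  refine ⟨fun q => zdisp i (Classical.choose (hsc qin q)), ?_⟩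
  intro p a q ht
  obtain ⟨R, hR⟩ := hsc q qin
  have hPq := Classical.choose_spec (hsc qin q)
  have hPp := Classical.choose_spec (hsc qin p)
  have h1 : zdisp i (Classical.choose (hsc qin q) ++ R) = 0 :=
    hc qin _ (isPath_append hPq hR)
  have h2 : zdisp i ((Classical.choose (hsc qin p) ++ [(p, a, q)]) ++ R) = 0 :=
    hc qin _ (isPath_append (isPath_append hPp (IsPath.cons ht (IsPath.nil q))) hR)
  simp only [zdisp_append] at h1 h2
  have h3 : zdisp i [(p, a, q)] = a i := by simp [zdisp]
  rw [h3] at h2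
  show zdisp i (Classical.choose (hsc qin q)) = zdisp i (Classical.choose (hsc qin p)) + a i
  omega


def cycSet {Q : Type} {d : ℕ} (T : Set (VTrans Q d)) : Set (Fin d → ℚ) :=
  {v | ∃ (q : Q) (l : List (VTrans Q d)), IsPath T q q l ∧ v = dispQ l}

noncomputable def Vspan {Q : Type} {d : ℕ} (T : Set (VTrans Q d)) : Submodule ℚ (Fin d → ℚ) :=
  Submodule.span ℚ (cycSet T)

lemma VS_le_Vspan {Q : Type} {d : ℕ} (T : Set (VTrans Q d)) (t : VTrans Q d) :
    VS T t ≤ Vspan T := by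
  apply Submodule.span_mono
  rintro v ⟨q, l, hl, -, hv⟩
  exact ⟨q, l, hl, hv⟩

lemma VS_eq_Vspan {Q : Type} {d : ℕ} {T : Set (VTrans Q d)}
    (hsc : ∀ p q : Q, ∃ l, IsPath T p q l) {t : VTrans Q d} (ht : t ∈ T) :
    VS T t = Vspan T := by
  refine le_antisymm (VS_le_Vspan T t) ?_
  rw [Vspan, Submodule.span_le]
  rintro v ⟨s, c, hc, rfl⟩
  obtain ⟨p, a, q⟩ := t
  obtain ⟨l1, hl1⟩ := hsc q s
  obtain ⟨l2, hl2⟩ := hsc s p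
  have hC1 : IsPath T p p ((p, a, q) :: (l1 ++ l2)) :=
    IsPath.cons ht (isPath_append hl1 hl2)
  have hC2 : IsPath T p p ((p, a, q) :: (l1 ++ (c ++ l2))) :=
    IsPath.cons ht (isPath_append hl1 (isPath_append hc hl2))
  have m1 : dispQ ((p, a, q) :: (l1 ++ l2)) ∈ VS T (p, a, q) :=
    Submodule.subset_span ⟨p, _, hC1, by simp, rfl⟩
  have m2 : dispQ ((p, a, q) :: (l1 ++ (c ++ l2))) ∈ VS T (p, a, q) :=
    Submodule.subset_span ⟨p, _, hC2, by simp, rfl⟩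
  have hrw : dispQ c = dispQ ((p, a, q) :: (l1 ++ (c ++ l2)))
      - dispQ ((p, a, q) :: (l1 ++ l2)) := by
    simp only [dispQ_cons, dispQ_append]
    abel
  rw [SetLike.mem_coe, hrw]
  exact sub_mem m2 m1


def projT {Q : Type} {d : ℕ} (tr : VTrans (Q × ℕ∞) d) : VTrans Q d :=
  (tr.1.1, tr.2.1, tr.2.2.1)

lemma dispQ_proj {Q : Type} {d : ℕ} (l : List (VTrans (Q × ℕ∞) d)) :
    dispQ (l.map projT) = dispQ l := by
  funext j
  simp [dispQ, List.map_map, Function.comp_def, projT]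

lemma zdisp_cons {Q : Type} {d : ℕ} (i : Fin d) (t : VTrans Q d) (l : List (VTrans Q d)) :
    zdisp i (t :: l) = t.2.1 i + zdisp i l := by
  simp [zdisp]

lemma unfold_proj_path {Q : Type} {d : ℕ} {T : Set (VTrans Q d)} {qin : Q} {i : Fin d} {B : ℕ}
    {s s' : Q × ℕ∞} {l : List (VTrans (Q × ℕ∞) d)}
    (h : IsPath (Unfold T qin i B) s s' l) :
    IsPath T s.1 s'.1 (l.map projT) := by
  induction h with
  | nil => exact IsPath.nil _
  | cons ht htail ih =>
    obtain ⟨p, q, a, m, n, heq, hT, -⟩ := ht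
    simp only [Prod.mk.injEq] at heq
    obtain ⟨rfl, rfl, rfl⟩ := heq
    exact IsPath.cons hT ih

lemma unfold_telescope {Q : Type} {d : ℕ} {T : Set (VTrans Q d)} {qin : Q} {i : Fin d} {B : ℕ}
    {s s' : Q × ℕ∞} {l : List (VTrans (Q × ℕ∞) d)}
    (h : IsPath (Unfold T qin i B) s s' l) :
    ∀ nv : ℕ, s'.2 = (nv : ℕ∞) → ∃ mv : ℕ, s.2 = (mv : ℕ∞) ∧ zdisp i l = (nv : ℤ) - mv := by
  induction h with
  | nil q => exact fun nv hn => ⟨nv, hn, by simp [zdisp]⟩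
  | cons ht htail ih =>
    intro nv hn
    obtain ⟨mv', hq', hsum⟩ := ih nv hn
    obtain ⟨p, q, a, m, n, heq, hT, hcase⟩ := ht
    simp only [Prod.mk.injEq] at heq
    obtain ⟨rfl, rfl, rfl⟩ := heq
    simp only at hq'
    rcases hcase with ⟨mv2, nv2, -, -, rfl, rfl, hrel⟩ | ⟨mv2, -, rfl, rfl, -⟩ | ⟨rfl, rfl, -⟩
    · have hnv2 : nv2 = mv' := by exact_mod_cast hq'
      refine ⟨mv2, rfl, ?_⟩
      rw [zdisp_cons]
      simp only
      omega
    · exact absurd hq' (by simp)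
    · exact absurd hq' (by simp)

lemma unfold_absorb {Q : Type} {d : ℕ} {T : Set (VTrans Q d)} {qin : Q} {i : Fin d} {B : ℕ}
    {s s' : Q × ℕ∞} {l : List (VTrans (Q × ℕ∞) d)}
    (h : IsPath (Unfold T qin i B) s s' l) (hs : s.2 = ⊤) :
    ∀ tr ∈ l, tr.1.2 = (⊤ : ℕ∞) := by
  induction h with
  | nil => simp
  | cons ht htail ih =>
    obtain ⟨p, q, a, m, n, heq, hT, hcase⟩ := ht
    simp only [Prod.mk.injEq] at heq
    obtain ⟨rfl, rfl, rfl⟩ := heq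
    simp only at hs
    rcases hcase with ⟨mv2, nv2, -, -, rfl, -⟩ | ⟨mv2, -, rfl, -⟩ | ⟨-, rfl, -⟩
    · exact absurd hs (by simp)
    · exact absurd hs (by simp)
    · intro tr htr
      rcases List.mem_cons.1 htr with rfl | htr
      · exact hs
      · exact ih rfl tr htr

lemma unfold_cycle_zero {Q : Type} {d : ℕ} {T : Set (VTrans Q d)} {qin : Q} {i : Fin d} {B : ℕ}
    {s : Q × ℕ∞} {l : List (VTrans (Q × ℕ∞) d)} {tr : VTrans (Q × ℕ∞) d}
    (h : IsPath (Unfold T qin i B) s s l) (htr : tr ∈ l) (hfin : tr.1.2 ≠ ⊤) :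
    zdisp i l = 0 := by
  rcases eq_or_ne s.2 ⊤ with hs | hs
  · exact absurd (unfold_absorb h hs tr htr) hfin
  · obtain ⟨nv, hnv⟩ := WithTop.ne_top_iff_exists.1 hs
    obtain ⟨mv, hmv, hsum⟩ := unfold_telescope h nv hnv.symm
    have : mv = nv := by rw [hmv] at hnv; exact (WithTop.coe_inj.1 hnv).symm
    omega

lemma VS_unfold_le {Q : Type} {d : ℕ} (T : Set (VTrans Q d)) (qin : Q) (i : Fin d) (B : ℕ)
    (tr : VTrans (Q × ℕ∞) d) :
    VS (Unfold T qin i B) tr ≤ Vspan T := by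
  rw [VS, Submodule.span_le]
  rintro v ⟨s, l, hl, -, rfl⟩
  exact Submodule.subset_span ⟨s.1, l.map projT, unfold_proj_path hl, (dispQ_proj l).symm⟩

lemma VS_unfold_fin_le {Q : Type} {d : ℕ} (T : Set (VTrans Q d)) (qin : Q) (i : Fin d) (B : ℕ)
    (tr : VTrans (Q × ℕ∞) d) (hfin : tr.1.2 ≠ ⊤) :
    VS (Unfold T qin i B) tr ≤
      Vspan T ⊓ LinearMap.ker (LinearMap.proj i : (Fin d → ℚ) →ₗ[ℚ] ℚ) := by
  rw [VS, Submodule.span_le]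
  rintro v ⟨s, l, hl, htr, rfl⟩
  refine Submodule.mem_inf.2 ⟨?_, ?_⟩
  · exact Submodule.subset_span ⟨s.1, l.map projT, unfold_proj_path hl, (dispQ_proj l).symm⟩
  · rw [LinearMap.mem_ker]
    show dispQ l i = 0
    rw [dispQ_apply]
    have : zdisp i l = 0 := unfold_cycle_zero hl htr hfin
    rw [show (l.map (fun t : VTrans (Q × ℕ∞) d => t.2.1 i)).sum = zdisp i l from rfl, this]
    simp

end Scratch

open Scratch

/-- Rank decrease by unfolding: if `G` is a strongly connected VASS, `i` a
component not fixed by `G`, and `x(i) < B`, then the `(i,B,r)`-unfolding `G'`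
of `G` satisfies `rank(G') <_lex rank(G)` (for any output counter value
`r ∈ ℕ_B`; the rank does not depend on the input and output states). -/
theorem stmt17 {Q : Type} {d : ℕ} (T : Set (VTrans Q d)) (qin qout : Q)
    (hfin : T.Finite)
    (hsc : ∀ p q : Q, ∃ l, IsPath T p q l)
    (i : Fin d)
    (hnotfixed : ¬ ∃ f : Q → ℤ, ∀ p a q, (p, a, q) ∈ T → f q = f p + a i)
    (B : ℕ) (xi : ℕ) (hxi : xi < B)
    (r : ℕ∞) (hr : r = ⊤ ∨ ∃ v : ℕ, v < B ∧ r = (v : ℕ∞)) :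
    LexLt (rankVASS (Unfold T qin i B)) (rankVASS T) := by
  classical
  set U := Unfold T qin i B with hU
  -- T is nonempty
  have hTne : T.Nonempty := by
    rcases Set.eq_empty_or_nonempty T with rfl | h
    · exact absurd ⟨fun _ => 0, fun p a q h => absurd h (Set.notMem_empty _)⟩ hnotfixed
    · exact h
  -- a transition into qin
  obtain ⟨tin, htinT, htinq⟩ : ∃ tin, tin ∈ T ∧ tin.2.2 = qin := by
    obtain ⟨⟨p0, a0, q0⟩, ht0⟩ := hTne
    obtain ⟨l, hl⟩ := hsc q0 qin
    rcases isPath_last hl with rfl | ⟨s, b, hsb⟩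
    · exact ⟨(p0, a0, q0), ht0, rfl⟩
    · exact ⟨(s, b, qin), hsb, rfl⟩
  set V := Vspan T with hV
  set k := Module.finrank ℚ V with hk
  have hkd : k ≤ d := by
    have h1 := Submodule.finrank_le V
    rwa [Module.finrank_fin_fun ℚ] at h1
  have hVSeq : ∀ t ∈ T, Module.finrank ℚ ↥(VS T t) = k := fun t ht => by
    rw [VS_eq_Vspan hsc ht]
  -- nonzero cycle displacement in component i
  obtain ⟨qc, lc, hlc, hnz⟩ := exists_nonzero_cycle qin hsc i hnotfixed
  have hvV : dispQ lc ∈ V := Submodule.subset_span ⟨qc, lc, hlc, rfl⟩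
  have hvi : dispQ lc i ≠ 0 := by
    rw [dispQ_apply]
    exact_mod_cast hnz
  set W := V ⊓ LinearMap.ker (LinearMap.proj i : (Fin d → ℚ) →ₗ[ℚ] ℚ) with hW
  have hWlt : W < V := by
    refine lt_of_le_of_ne inf_le_left (fun h => hvi ?_)
    have : dispQ lc ∈ W := h ▸ hvV
    exact this.2
  have hfrW : Module.finrank ℚ ↥W < k := Submodule.finrank_lt_finrank_of_lt hWlt
  -- finrank bounds for unfolding transitions
  have hUle : ∀ tr : VTrans (Q × ℕ∞) d, Module.finrank ℚ ↥(VS U tr) ≤ k :=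
    fun tr => Submodule.finrank_mono (VS_unfold_le T qin i B tr)
  have hUfin : ∀ tr : VTrans (Q × ℕ∞) d, tr.1.2 ≠ ⊤ →
      Module.finrank ℚ ↥(VS U tr) < k :=
    fun tr h => lt_of_le_of_lt (Submodule.finrank_mono (VS_unfold_fin_le T qin i B tr h)) hfrW
  refine ⟨⟨k, by omega⟩, ?_, ?_⟩
  · -- strict decrease at index k
    have hsk : rankVASS T ⟨k, by omega⟩ = T.ncard := by
      unfold rankVASS
      congr 1
      ext t
      simp only [Set.mem_setOf_eq]
      exact ⟨fun h => h.1, fun h => ⟨h, hVSeq t h⟩⟩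
    set g : VTrans Q d → VTrans (Q × ℕ∞) d :=
      fun t => ((t.1, ⊤), t.2.1, (t.2.2, ⊤)) with hg
    have hsub : {tr | tr ∈ U ∧ Module.finrank ℚ ↥(VS U tr) = k} ⊆ g '' (T \ {tin}) := by
      rintro tr ⟨htr, hrk⟩
      obtain ⟨p, q, a, m, n, rfl, hT, hcase⟩ := htr
      rcases hcase with ⟨mv, nv, -, -, rfl, -⟩ | ⟨mv, -, rfl, -⟩ | ⟨rfl, rfl, hq⟩
      · exact absurd hrk (Nat.ne_of_lt (hUfin _ (by simp)))
      · exact absurd hrk (Nat.ne_of_lt (hUfin _ (by simp)))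
      · refine ⟨(p, a, q), ⟨hT, ?_⟩, rfl⟩
        simp only [Set.mem_singleton_iff]
        intro h
        subst h
        exact hq htinq
    have hle1 : rankVASS U ⟨k, by omega⟩ ≤ (T \ {tin}).ncard := by
      calc rankVASS U ⟨k, by omega⟩
          ≤ (g '' (T \ {tin})).ncard :=
            Set.ncard_le_ncard hsub ((hfin.diff).image g)
        _ ≤ (T \ {tin}).ncard := Set.ncard_image_le (hfin.diff)
    have hdiff : (T \ {tin}).ncard = T.ncard - 1 :=
      Set.ncard_diff_singleton_of_mem htinT
    have hpos : 0 < T.ncard := (Set.ncard_pos hfin).2 hTne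
    rw [hsk]
    omega
  · -- higher indices agree (both zero)
    intro j hj
    have hjk : k < (j : ℕ) := hj
    have h1 : rankVASS U j = 0 := by
      have he : {tr | tr ∈ U ∧ Module.finrank ℚ ↥(VS U tr) = (j : ℕ)} = ∅ := by
        ext tr
        simp only [Set.mem_setOf_eq, Set.mem_empty_iff_false, iff_false, not_and]
        intro _ h
        have := hUle tr
        omega
      unfold rankVASS
      rw [he, Set.ncard_empty]
    have h2 : rankVASS T j = 0 := by
      have he : {t | t ∈ T ∧ Module.finrank ℚ ↥(VS T t) = (j : ℕ)} = ∅ := by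
        ext t
        simp only [Set.mem_setOf_eq, Set.mem_empty_iff_false, iff_false, not_and]
        intro ht h
        rw [hVSeq t ht] at h
        omega
      unfold rankVASS
      rw [he, Set.ncard_empty]
    rw [h1, h2]
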